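/- For 0 ≤ r₁ ≤ r₂ ≤ r₃ ≤ n, the composition of the inclusion Radon transforms satisfies R^{r₂,r₃}_⊂ ∘ R^{r₁,r₂}_⊂ = ([r₃ choose r₂]_q [r₂ choose r₁]_q / [r₃ choose r₁]_q) · R^{r₁,r₃}_⊂, equivalently R^{r₂,r₃}_⊂ ∘ R^{r₁,r₂}_⊂ = [r₃ - r₁ choose r₂ - r₁]_q · R^{r₁,r₃}_⊂. -/

import Mathlib

noncomputable def qPoch (q : ℚ) (k : ℕ) : ℚ := ∏ j ∈ Finset.range k, (1 - q ^ (j + 1))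

open scoped Classical

noncomputable def qBinom (q : ℚ) (n r : ℕ) : ℚ := qPoch q n / (qPoch q r * qPoch q (n - r))

/-- The inclusion Radon transform `R^{r,r'}_⊂` from functions on `r`-dimensional
subspaces to functions on `r'`-dimensional subspaces:
`(Rφ)(x') = ∑_{x ⊆ x', dim x = r} φ(x)`. -/
noncomputable def radon (K Ω : Type*) [Field K] [AddCommGroup Ω] [Module K Ω]
    (r r' : ℕ) (φ : {W : Submodule K Ω // Module.finrank K W = r} → ℂ)
    (x' : {W : Submodule K Ω // Module.finrank K W = r'}) : ℂ :=
  ∑ᶠ x : {W : Submodule K Ω // Module.finrank K W = r}, if x.1 ≤ x'.1 then φ x else 0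

open Module Submodule Finset

/-! ### Auxiliary arithmetic lemmas -/

lemma qPoch_ne_zero {q : ℚ} (hq : 2 ≤ q) (k : ℕ) : qPoch q k ≠ 0 := by
  refine Finset.prod_ne_zero_iff.2 fun j _ => ?_
  have h1 : (1 : ℚ) < q ^ (j + 1) := one_lt_pow₀ (by linarith) (Nat.succ_ne_zero j)
  intro h
  rw [sub_eq_zero] at h
  exact absurd h.symm (ne_of_gt h1)

lemma prod_pow_sub_pow {q : ℚ} (d k : ℕ) (hk : d ≤ k) :
    ∏ i ∈ range d, (q ^ k - q ^ i)
      = (∏ i ∈ range d, q ^ i) * ((-1) ^ d * ∏ i ∈ range d, (1 - q ^ (k - d + (i + 1)))) := by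
  have h1 : ∏ i ∈ range d, (q ^ k - q ^ i)
      = ∏ i ∈ range d, (q ^ i * (-(1 - q ^ (k - i)))) := by
    refine Finset.prod_congr rfl fun i hi => ?_
    have hik : i ≤ k := le_trans (le_of_lt (mem_range.1 hi)) hk
    rw [neg_sub, mul_sub, mul_one, ← pow_add, Nat.add_sub_cancel' hik]
  rw [h1, Finset.prod_mul_distrib]
  congr 1
  have h2 : ∏ i ∈ range d, (-(1 - q ^ (k - i)))
      = (-1) ^ d * ∏ i ∈ range d, (1 - q ^ (k - i)) := by
    calc ∏ i ∈ range d, (-(1 - q ^ (k - i)))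
        = ∏ i ∈ range d, ((-1) * (1 - q ^ (k - i))) := by simp [neg_one_mul]
      _ = (-1) ^ d * ∏ i ∈ range d, (1 - q ^ (k - i)) := by
          rw [Finset.prod_mul_distrib, Finset.prod_const, Finset.card_range]
  rw [h2]
  congr 1
  rw [← Finset.prod_range_reflect (fun j => 1 - q ^ (k - d + (j + 1))) d]
  refine Finset.prod_congr rfl fun i hi => ?_
  have : i < d := mem_range.1 hi
  congr 2
  omega

lemma qBinom_mul_eq {q : ℚ} (hq : 2 ≤ q) {m d : ℕ} (hd : d ≤ m) :
    qBinom q m d * ∏ i ∈ range d, (q ^ d - q ^ i) = ∏ i ∈ range d, (q ^ m - q ^ i) := by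
  have hm : qPoch q m = qPoch q (m - d) * ∏ i ∈ range d, (1 - q ^ (m - d + (i + 1))) := by
    conv_lhs => rw [show m = (m - d) + d from (Nat.sub_add_cancel hd).symm]
    rw [qPoch, Finset.prod_range_add]
    rfl
  have hb : qBinom q m d = (∏ i ∈ range d, (1 - q ^ (m - d + (i + 1)))) / qPoch q d := by
    rw [qBinom, hm]
    rw [mul_comm (qPoch q d) (qPoch q (m - d)), ← div_div, mul_div_assoc,
      mul_div_assoc', mul_div_cancel_left₀ _ (qPoch_ne_zero hq (m - d))]
  have hdd : ∏ i ∈ range d, (1 - q ^ (d - d + (i + 1))) = qPoch q d := by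
    simp [qPoch, Nat.sub_self]
  rw [prod_pow_sub_pow d d le_rfl, prod_pow_sub_pow d m hd, hdd, hb]
  field_simp [qPoch_ne_zero hq d]

/-! ### Counting subspaces -/

section Aux

variable {K V : Type*} [Field K] [Fintype K] [AddCommGroup V] [Module K V]
  [FiniteDimensional K V]

set_option linter.unusedSectionVars false

/-- rank-nullity for preimages under the quotient map -/
lemma finrank_comap_mkQ (p : Submodule K V) (U : Submodule K (V ⧸ p)) :
    finrank K (U.comap p.mkQ) = finrank K U + finrank K p := by
  have h3 := LinearMap.finrank_range_add_finrank_ker (p.mkQ.domRestrict (U.comap p.mkQ))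
  have h1 : LinearMap.range (p.mkQ.domRestrict (U.comap p.mkQ)) = U := by
    rw [LinearMap.range_domRestrict]
    exact Submodule.map_comap_eq_of_surjective p.mkQ_surjective U
  have h2 : LinearMap.ker (p.mkQ.domRestrict (U.comap p.mkQ))
      = p.comap (U.comap p.mkQ).subtype := by
    rw [LinearMap.ker_domRestrict, Submodule.ker_mkQ]
  have hple : p ≤ U.comap p.mkQ := by
    intro x hx
    simp only [Submodule.mem_comap, Submodule.mkQ_apply]
    rw [Submodule.Quotient.mk_eq_zero p |>.2 hx]
    exact U.zero_mem
  have h4 : finrank K (p.comap (U.comap p.mkQ).subtype) = finrank K p :=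
    (Submodule.comapSubtypeEquivOfLe hple).finrank_eq
  rw [h1, h2, h4] at h3
  exact h3.symm

/-- fibers of the span map -/
def fiberEquiv (d : ℕ) (W : {W : Submodule K V // finrank K W = d}) :
    {s : {s : Fin d → V // LinearIndependent K s} // Submodule.span K (Set.range s.1) = W.1}
      ≃ {t : Fin d → W.1 // LinearIndependent K t} where
  toFun s := ⟨fun i => ⟨s.1.1 i, by
      exact s.2.le (Submodule.subset_span (Set.mem_range_self i))⟩,
    LinearIndependent.of_comp W.1.subtype s.1.2⟩
  invFun t := ⟨⟨W.1.subtype ∘ t.1, t.2.map' W.1.subtype (Submodule.ker_subtype W.1)⟩, by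
    have hLI : LinearIndependent K (W.1.subtype ∘ t.1) :=
      t.2.map' W.1.subtype (Submodule.ker_subtype W.1)
    have hle : Submodule.span K (Set.range (W.1.subtype ∘ t.1)) ≤ W.1 := by
      rw [Submodule.span_le]
      rintro _ ⟨i, rfl⟩
      exact (t.1 i).2
    refine Submodule.eq_of_le_of_finrank_le hle ?_
    rw [finrank_span_eq_card hLI, Fintype.card_fin, W.2]⟩
  left_inv s := Subtype.ext (Subtype.ext rfl)
  right_inv t := Subtype.ext (funext fun i => Subtype.ext rfl)

lemma card_subspaces_mul (d : ℕ) (hd : d ≤ finrank K V) :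
    Nat.card {W : Submodule K V // finrank K W = d}
        * ∏ i ∈ range d, (Fintype.card K ^ d - Fintype.card K ^ i)
      = ∏ i ∈ range d, (Fintype.card K ^ finrank K V - Fintype.card K ^ i) := by
  haveI : Finite V := Module.finite_of_finite K
  haveI : Finite (Submodule K V) :=
    Finite.of_injective (fun W => (W : Set V)) SetLike.coe_injective
  letI : Fintype {W : Submodule K V // finrank K W = d} := Fintype.ofFinite _
  letI : Fintype {s : Fin d → V // LinearIndependent K s} := Fintype.ofFinite _
  have hLI := card_linearIndependent (K := K) (V := V) hd
  have e := (Equiv.sigmaFiberEquiv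
    (fun s : {s : Fin d → V // LinearIndependent K s} =>
      (⟨Submodule.span K (Set.range s.1), by
        rw [finrank_span_eq_card s.2, Fintype.card_fin]⟩ :
        {W : Submodule K V // finrank K W = d}))).symm
  have hcard : Nat.card {s : Fin d → V // LinearIndependent K s}
      = ∑ W : {W : Submodule K V // finrank K W = d},
          Nat.card {t : Fin d → W.1 // LinearIndependent K t} := by
    rw [Nat.card_congr e, Nat.card_eq_fintype_card]
    classical
    rw [Fintype.card_sigma]
    refine Finset.sum_congr rfl fun W _ => ?_
    rw [← Nat.card_eq_fintype_card]
    refine Nat.card_congr (Equiv.trans ?_ (fiberEquiv d W))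
    exact Equiv.subtypeEquivRight fun s => by simp [Subtype.ext_iff]
  have hfiber : ∀ W : {W : Submodule K V // finrank K W = d},
      Nat.card {t : Fin d → W.1 // LinearIndependent K t}
        = ∏ i ∈ range d, (Fintype.card K ^ d - Fintype.card K ^ i) := by
    intro W
    rw [card_linearIndependent (K := K) (V := W.1) (k := d) (le_of_eq W.2.symm), W.2,
      ← Fin.prod_univ_eq_prod_range]
  calc Nat.card {W : Submodule K V // finrank K W = d}
        * ∏ i ∈ range d, (Fintype.card K ^ d - Fintype.card K ^ i)
      = ∑ W : {W : Submodule K V // finrank K W = d},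
          Nat.card {t : Fin d → W.1 // LinearIndependent K t} := by
        rw [Finset.sum_congr rfl fun W _ => hfiber W, Finset.sum_const, smul_eq_mul,
          Nat.card_eq_fintype_card, Finset.card_univ]
    _ = Nat.card {s : Fin d → V // LinearIndependent K s} := hcard.symm
    _ = ∏ i ∈ range d, (Fintype.card K ^ finrank K V - Fintype.card K ^ i) := by
        rw [hLI, ← Fin.prod_univ_eq_prod_range]

lemma card_eq_qBinom (d : ℕ) (hd : d ≤ finrank K V) :
    (Nat.card {W : Submodule K V // finrank K W = d} : ℚ)
      = qBinom (Fintype.card K : ℚ) (finrank K V) d := by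
  set q := Fintype.card K with hqdef
  have hq1 : 1 ≤ q := Fintype.card_pos
  have hq2 : (2 : ℚ) ≤ (q : ℚ) := by exact_mod_cast Fintype.one_lt_card
  have hcast : ∀ k, d ≤ k → ((∏ i ∈ range d, (q ^ k - q ^ i) : ℕ) : ℚ)
      = ∏ i ∈ range d, ((q : ℚ) ^ k - (q : ℚ) ^ i) := by
    intro k hk
    rw [Nat.cast_prod]
    refine Finset.prod_congr rfl fun i hi => ?_
    have hle : q ^ i ≤ q ^ k :=
      Nat.pow_le_pow_right hq1 (le_trans (le_of_lt (mem_range.1 hi)) hk)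
    rw [Nat.cast_sub hle, Nat.cast_pow, Nat.cast_pow]
  have h := card_subspaces_mul (K := K) (V := V) d hd
  have hQ : (Nat.card {W : Submodule K V // finrank K W = d} : ℚ)
        * ∏ i ∈ range d, ((q : ℚ) ^ d - (q : ℚ) ^ i)
      = ∏ i ∈ range d, ((q : ℚ) ^ finrank K V - (q : ℚ) ^ i) := by
    rw [← hcast d le_rfl, ← hcast _ hd, ← Nat.cast_mul, h]
  have hne : (∏ i ∈ range d, ((q : ℚ) ^ d - (q : ℚ) ^ i)) ≠ 0 := by
    refine Finset.prod_ne_zero_iff.2 fun i hi => ?_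
    have h1 : (q : ℚ) ^ i < (q : ℚ) ^ d :=
      pow_lt_pow_right₀ (by linarith) (mem_range.1 hi)
    exact sub_ne_zero.2 (ne_of_gt h1)
  exact mul_right_cancel₀ hne (hQ.trans (qBinom_mul_eq hq2 hd).symm)

/-- The interval `[A, B]` in the submodule lattice corresponds to submodules of `B ⧸ A`. -/
noncomputable def intervalEquiv {A B : Submodule K V} (hAB : A ≤ B) (r : ℕ)
    (hr : finrank K A ≤ r) :
    {W : Submodule K V // finrank K W = r ∧ A ≤ W ∧ W ≤ B}
      ≃ {U : Submodule K (B ⧸ (A.comap B.subtype)) // finrank K U = r - finrank K A} := by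
  set A' : Submodule K B := A.comap B.subtype with hA'
  have hA'rank : finrank K A' = finrank K A := (Submodule.comapSubtypeEquivOfLe hAB).finrank_eq
  have hmapA : A'.map B.subtype = A := by
    rw [hA', Submodule.map_comap_subtype, inf_eq_right.2 hAB]
  have hrank : ∀ U : Submodule K (B ⧸ A'),
      finrank K ((U.comap A'.mkQ).map B.subtype) = finrank K U + finrank K A := by
    intro U
    rw [Submodule.finrank_map_subtype_eq, finrank_comap_mkQ, hA'rank]
  have hback : ∀ U : Submodule K (B ⧸ A'),
      ((((U.comap A'.mkQ).map B.subtype).comap B.subtype).map A'.mkQ) = U := by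
    intro U
    rw [Submodule.comap_map_eq_of_injective (Submodule.injective_subtype B),
      Submodule.map_comap_eq_of_surjective A'.mkQ_surjective]
  have hfwd : ∀ W : Submodule K V, A ≤ W → W ≤ B →
      ((((W.comap B.subtype).map A'.mkQ).comap A'.mkQ).map B.subtype) = W := by
    intro W hAW hWB
    rw [Submodule.comap_map_eq, Submodule.ker_mkQ,
      sup_eq_left.2 (by exact Submodule.comap_mono hAW : A' ≤ W.comap B.subtype),
      Submodule.map_comap_subtype, inf_eq_right.2 hWB]
  refine
    { toFun := fun W => ⟨(W.1.comap B.subtype).map A'.mkQ, ?_⟩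
      invFun := fun U => ⟨(U.1.comap A'.mkQ).map B.subtype, ?_, ?_, ?_⟩
      left_inv := ?_
      right_inv := ?_ }
  · obtain ⟨hWr, hAW, hWB⟩ := W.2
    have hAr : finrank K A ≤ finrank K W.1 := by
      rw [← hA'rank, ← Submodule.finrank_map_subtype_eq B A', hmapA]
      exact Submodule.finrank_mono hAW
    have h := hrank ((W.1.comap B.subtype).map A'.mkQ)
    rw [hfwd W.1 hAW hWB, hWr] at h
    rw [hWr] at hAr
    omega
  · rw [hrank U.1, U.2]
    omega
  · have h1 : A' ≤ U.1.comap A'.mkQ := by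
      intro x hx
      have hx0 : A'.mkQ x = 0 := (Submodule.Quotient.mk_eq_zero A').2 hx
      simp [Submodule.mem_comap, hx0]
    calc A = A'.map B.subtype := hmapA.symm
      _ ≤ (U.1.comap A'.mkQ).map B.subtype := Submodule.map_mono h1
  · exact Submodule.map_subtype_le B _
  · intro W
    exact Subtype.ext (hfwd W.1 W.2.2.1 W.2.2.2)
  · intro U
    exact Subtype.ext (hback U.1)

end Aux

/-- Composition of inclusion Radon transforms: for `r₁ ≤ r₂ ≤ r₃ ≤ n`,
`R^{r₂,r₃}_⊂ ∘ R^{r₁,r₂}_⊂ = [r₃ - r₁ choose r₂ - r₁]_q · R^{r₁,r₃}_⊂`. -/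
theorem radon_comp (q n r₁ r₂ r₃ : ℕ) (K : Type*) [Field K] [Fintype K]
    (hq : Fintype.card K = q)
    (Ω : Type*) [AddCommGroup Ω] [Module K Ω] [FiniteDimensional K Ω]
    (hn : Module.finrank K Ω = n)
    (h12 : r₁ ≤ r₂) (h23 : r₂ ≤ r₃) (h3n : r₃ ≤ n)
    (φ : {W : Submodule K Ω // Module.finrank K W = r₁} → ℂ)
    (x₃ : {W : Submodule K Ω // Module.finrank K W = r₃}) :
    radon K Ω r₂ r₃ (radon K Ω r₁ r₂ φ) x₃ =
      (qBinom (q : ℚ) (r₃ - r₁) (r₂ - r₁) : ℂ) * radon K Ω r₁ r₃ φ x₃ := by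
  classical
  subst hq
  haveI : Finite Ω := Module.finite_of_finite K
  haveI : Finite (Submodule K Ω) :=
    Finite.of_injective (fun W => (W : Set Ω)) SetLike.coe_injective
  letI : Fintype {W : Submodule K Ω // finrank K W = r₁} := Fintype.ofFinite _
  letI : Fintype {W : Submodule K Ω // finrank K W = r₂} := Fintype.ofFinite _
  -- the key counting fact
  have hcount : ∀ x₁ : {W : Submodule K Ω // finrank K W = r₁}, x₁.1 ≤ x₃.1 →
      (Nat.card {x₂ : {W : Submodule K Ω // finrank K W = r₂} //
          x₁.1 ≤ x₂.1 ∧ x₂.1 ≤ x₃.1} : ℚ)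
        = qBinom (Fintype.card K : ℚ) (r₃ - r₁) (r₂ - r₁) := by
    intro x₁ h13
    have e1 : {x₂ : {W : Submodule K Ω // finrank K W = r₂} // x₁.1 ≤ x₂.1 ∧ x₂.1 ≤ x₃.1}
        ≃ {W : Submodule K Ω // finrank K W = r₂ ∧ x₁.1 ≤ W ∧ W ≤ x₃.1} :=
      { toFun := fun x => ⟨x.1.1, x.1.2, x.2.1, x.2.2⟩
        invFun := fun W => ⟨⟨W.1, W.2.1⟩, W.2.2.1, W.2.2.2⟩
        left_inv := fun _ => rfl
        right_inv := fun _ => rfl }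
    have hr1 : finrank K x₁.1 ≤ r₂ := by rw [x₁.2]; exact h12
    have e2 := intervalEquiv (K := K) (V := Ω) h13 r₂ hr1
    set A' := x₁.1.comap x₃.1.subtype with hA'def
    have e3 : {U : Submodule K (x₃.1 ⧸ A') // finrank K U = r₂ - finrank K x₁.1}
        ≃ {U : Submodule K (x₃.1 ⧸ A') // finrank K U = r₂ - r₁} :=
      Equiv.subtypeEquivRight fun U => by rw [x₁.2]
    rw [Nat.card_congr ((e1.trans e2).trans e3)]
    have hA'rank : finrank K A' = r₁ := by
      rw [(Submodule.comapSubtypeEquivOfLe h13).finrank_eq, x₁.2]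
    have hQrank : finrank K (x₃.1 ⧸ A') = r₃ - r₁ := by
      have h := Submodule.finrank_quotient_add_finrank A'
      rw [hA'rank] at h
      have hx3 : finrank K x₃.1 = r₃ := x₃.2
      omega
    have hd : r₂ - r₁ ≤ finrank K (x₃.1 ⧸ A') := by omega
    rw [card_eq_qBinom (K := K) (V := (x₃.1 ⧸ A')) (r₂ - r₁) hd, hQrank]
  -- now the summation manipulation
  simp only [radon, finsum_eq_sum_of_fintype]
  have step1 : ∀ x₂ : {W : Submodule K Ω // finrank K W = r₂},
      (if x₂.1 ≤ x₃.1 then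
          ∑ x₁ : {W : Submodule K Ω // finrank K W = r₁},
            (if x₁.1 ≤ x₂.1 then φ x₁ else 0) else 0)
        = ∑ x₁ : {W : Submodule K Ω // finrank K W = r₁},
            (if x₁.1 ≤ x₂.1 ∧ x₂.1 ≤ x₃.1 then φ x₁ else 0) := by
    intro x₂
    by_cases h : x₂.1 ≤ x₃.1 <;> simp [h]
  rw [Finset.sum_congr rfl fun x₂ _ => step1 x₂, Finset.sum_comm]
  have step2 : ∀ x₁ : {W : Submodule K Ω // finrank K W = r₁},
      (∑ x₂ : {W : Submodule K Ω // finrank K W = r₂},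
          if x₁.1 ≤ x₂.1 ∧ x₂.1 ≤ x₃.1 then φ x₁ else 0)
        = (if x₁.1 ≤ x₃.1 then (qBinom (Fintype.card K : ℚ) (r₃ - r₁) (r₂ - r₁) : ℂ) else 0)
            * φ x₁ := by
    intro x₁
    rw [Finset.sum_ite, Finset.sum_const, Finset.sum_const_zero, add_zero, nsmul_eq_mul]
    by_cases h : x₁.1 ≤ x₃.1
    · rw [if_pos h]
      congr 1
      have hcf : (Finset.univ.filter
            fun x₂ : {W : Submodule K Ω // finrank K W = r₂} =>
              x₁.1 ≤ x₂.1 ∧ x₂.1 ≤ x₃.1).card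
          = Nat.card {x₂ : {W : Submodule K Ω // finrank K W = r₂} //
              x₁.1 ≤ x₂.1 ∧ x₂.1 ≤ x₃.1} := by
        rw [Nat.card_eq_fintype_card, Fintype.card_subtype]
      rw [hcf]
      have hc := hcount x₁ h
      rw [show ((Nat.card {x₂ : {W : Submodule K Ω // finrank K W = r₂} //
          x₁.1 ≤ x₂.1 ∧ x₂.1 ≤ x₃.1} : ℕ) : ℂ)
        = (((Nat.card {x₂ : {W : Submodule K Ω // finrank K W = r₂} //
          x₁.1 ≤ x₂.1 ∧ x₂.1 ≤ x₃.1} : ℕ) : ℚ) : ℂ) by norm_cast, hc]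
    · rw [if_neg h]
      have hempty : (Finset.univ.filter
            fun x₂ : {W : Submodule K Ω // finrank K W = r₂} =>
              x₁.1 ≤ x₂.1 ∧ x₂.1 ≤ x₃.1) = ∅ := by
        refine Finset.filter_eq_empty_iff.2 fun x₂ _ => ?_
        rintro ⟨h1, h2⟩
        exact h (h1.trans h2)
      rw [hempty]
      simp
  rw [Finset.sum_congr rfl fun x₁ _ => step2 x₁, Finset.mul_sum]
  refine Finset.sum_congr rfl fun x₁ _ => ?_
  by_cases h : x₁.1 ≤ x₃.1 <;> simp [h]
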